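/- If A is a self-adjoint linear map on a finite-dimensional real vector space with a non-degenerate symmetric bilinear form, then for each complex eigenvalue λ the restriction of the bilinear form to the generalized eigenspace E_λ + E_{conj(λ)} is non-degenerate. -/

import Mathlib

/-- The generalized eigenspace `E_λ = ker((A - λI)^m (A - conj(λ)I)^m)`, realized as the kernel
of the `m`-th power of the real operator `A² - 2Re(λ)A + |λ|²·Id`, where `m = dim V`. -/
noncomputable def genEig {V : Type*} [AddCommGroup V] [Module ℝ V]
    (A : Module.End ℝ V) (lam : ℂ) : Submodule ℝ V :=
  LinearMap.ker ((A * A - (2 * lam.re) • A +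
    (lam.re ^ 2 + lam.im ^ 2) • (1 : Module.End ℝ V)) ^ Module.finrank ℝ V)

theorem stmt1 {V : Type*} [AddCommGroup V] [Module ℝ V] [FiniteDimensional ℝ V]
    (B : LinearMap.BilinForm ℝ V) (hsymm : ∀ x y, B x y = B y x)
    (hnd : B.Nondegenerate)
    (A : Module.End ℝ V) (hA : ∀ x y, B (A x) y = B x (A y))
    (lam : ℂ) (hlam : genEig A lam ≠ ⊥) :
    ∀ x ∈ genEig A lam ⊔ genEig A (starRingEnd ℂ lam),
      (∀ y ∈ genEig A lam ⊔ genEig A (starRingEnd ℂ lam), B x y = 0) → x = 0 := by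
  have hconj : genEig A (starRingEnd ℂ lam) = genEig A lam := by
    simp [genEig, Complex.conj_re, Complex.conj_im, neg_sq]
  rw [hconj, sup_idem]
  set m := Module.finrank ℝ V with hm
  set g : Module.End ℝ V := A * A - (2 * lam.re) • A + (lam.re ^ 2 + lam.im ^ 2) • 1 with hg
  have hgB : ∀ x y, B (g x) y = B x (g y) := by
    intro x y
    simp only [hg, LinearMap.add_apply, LinearMap.sub_apply, LinearMap.smul_apply,
      Module.End.mul_apply, Module.End.one_apply, map_add, map_sub, map_smul,
      LinearMap.add_apply, LinearMap.sub_apply, LinearMap.smul_apply, hA]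
  have hgBn : ∀ n (x y : V), B ((g ^ n) x) y = B x ((g ^ n) y) := by
    intro n
    induction n with
    | zero => simp
    | succ k ih =>
      intro x y
      have hcomm : g ((g ^ k) y) = (g ^ k) (g y) := by
        rw [← Module.End.mul_apply, ← Module.End.mul_apply, ← pow_succ', pow_succ]
      rw [pow_succ, Module.End.mul_apply, Module.End.mul_apply, ih, hgB, hcomm]
  have hgeneq : genEig A lam = LinearMap.ker (g ^ m) := rfl
  -- disjointness of kernel and range
  have hdisj : LinearMap.ker (g ^ m) ⊓ LinearMap.range (g ^ m) = ⊥ := by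
    rw [Submodule.eq_bot_iff]
    rintro x ⟨hxk, w, rfl⟩
    have : w ∈ LinearMap.ker (g ^ (m + m)) := by
      simpa [pow_add, Module.End.mul_apply] using hxk
    have hw : w ∈ LinearMap.ker (g ^ m) :=
      Module.End.ker_pow_le_ker_pow_finrank g (m + m) this
    simpa [LinearMap.mem_ker] using hw
  have hsup : LinearMap.ker (g ^ m) ⊔ LinearMap.range (g ^ m) = ⊤ := by
    apply Submodule.eq_top_of_finrank_eq
    have h1 := Submodule.finrank_sup_add_finrank_inf_eq
      (LinearMap.ker (g ^ m)) (LinearMap.range (g ^ m))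
    rw [hdisj] at h1
    have h2 := LinearMap.finrank_range_add_finrank_ker (g ^ m)
    simp only [finrank_bot, add_zero] at h1
    omega
  intro x hx hx0
  rw [hgeneq] at hx hx0
  apply hnd.1 x
  intro z
  have hz : z ∈ LinearMap.ker (g ^ m) ⊔ LinearMap.range (g ^ m) := hsup ▸ Submodule.mem_top
  obtain ⟨y, hy, r, hr, rfl⟩ := Submodule.mem_sup.mp hz
  obtain ⟨w, rfl⟩ := hr
  have hxz : (g ^ m) x = 0 := hx
  rw [map_add, hx0 y hy, ← hgBn, hxz]
  simp
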